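/- arXiv:2106.00515 — 2 statements merged into one kernel-verified Lean document; each statement's English description precedes it below -/
import Mathlib

section
/- Let n, d_m, d be positive integers, let X ∈ ℝ^{n×d_m} have rows x_1,…,x_n (row vectors), and let W_Q, W_K, W_V ∈ ℝ^{d_m×d}. Fix a query index l ∈ {1,…,n} and a nonempty subset S ⊆ {1,…,n}. For t ∈ S define the attention weights a_{lt}(W_Q) = exp(x_l W_Q W_K^T x_t^T/√d) / Σ_{t'∈S} exp(x_l W_Q W_K^T x_{t'}^T/√d), and set V̂_l(W_Q) = Σ_{t∈S} a_{lt}(W_Q) x_t W_V ∈ ℝ^{1×d}. Define the weighted covariance matrix Var_{a_l}(x) = Σ_{t∈S} a_{lt} x_t^T x_t − (Σ_{t∈S} a_{lt} x_t)^T (Σ_{t∈S} a_{lt} x_t) ∈ ℝ^{d_m×d_m}. Then V̂_l is differentiable in the entries of W_Q, and for every i ∈ {1,…,d_m} and j ∈ {1,…,d} the partial derivative of V̂_l with respect to the (i,j) entry of W_Q equals (1/√d) · x_{li} · W_{K,·j}^T Var_{a_l}(x) W_V, where x_{li} is the i-th entry of x_l and W_{K,·j} ∈ ℝ^{d_m}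 is the j-th column of W_K. In particular this holds both for the k-NN attention (S the selected top-k index set, held fixed) and for fully-connected attention (S = {1,…,n}). -/
open Matrix Finset Real

private lemma sum_swap_mul {ι κ : Type*} (S : Finset ι) [Fintype κ] (f : ι → ℝ)
    (g : ι → κ → ℝ) (V : κ → ℝ) :
    ∑ e : κ, (∑ t ∈ S, f t * g t e) * V e = ∑ t ∈ S, f t * ∑ e : κ, g t e * V e := by
  simp only [Finset.sum_mul]
  rw [Finset.sum_comm]
  refine Finset.sum_congr rfl fun t _ => ?_
  rw [Finset.mul_sum]
  exact Finset.sum_congr rfl fun e _ => by ring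

private lemma sum_swap_mul' {ι κ : Type*} (S : Finset ι) [Fintype κ] (f : ι → ℝ)
    (g : ι → κ → ℝ) (K : κ → ℝ) :
    ∑ b : κ, K b * ∑ t ∈ S, f t * g t b = ∑ t ∈ S, f t * ∑ b : κ, g t b * K b := by
  simp only [Finset.mul_sum]
  rw [Finset.sum_comm]
  exact Finset.sum_congr rfl fun t _ => Finset.sum_congr rfl fun b _ => by ring

private lemma cov_contract {ι : Type*} (S : Finset ι) {m : ℕ} (x : ι → Fin m → ℝ)
    (a : ι → ℝ) (K V : Fin m → ℝ) :
    ∑ b, K b * ∑ e, ((∑ t ∈ S, a t * (x t b * x t e)) -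
        (∑ t ∈ S, a t * x t b) * (∑ t ∈ S, a t * x t e)) * V e
    = (∑ t ∈ S, a t * ((∑ b, x t b * K b) * (∑ e, x t e * V e)))
      - (∑ t ∈ S, a t * (∑ b, x t b * K b)) * (∑ t ∈ S, a t * (∑ e, x t e * V e)) := by
  have hν : ∀ b : Fin m, ∑ e, ((∑ t ∈ S, a t * (x t b * x t e)) -
        (∑ t ∈ S, a t * x t b) * (∑ t ∈ S, a t * x t e)) * V e
      = (∑ t ∈ S, a t * (x t b * ∑ e, x t e * V e)) -
        (∑ t ∈ S, a t * x t b) * (∑ t ∈ S, a t * ∑ e, x t e * V e) := by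
    intro b
    simp only [sub_mul, Finset.sum_sub_distrib]
    congr 1
    · rw [sum_swap_mul S a (fun t e => x t b * x t e) V]
      refine Finset.sum_congr rfl fun t _ => ?_
      simp only [Finset.mul_sum]
      exact Finset.sum_congr rfl fun e _ => by ring
    · have h : ∀ e : Fin m, (∑ t ∈ S, a t * x t b) * (∑ t ∈ S, a t * x t e) * V e
          = (∑ t ∈ S, a t * x t b) * ((∑ t ∈ S, a t * x t e) * V e) := fun e => by ring
      simp only [h, ← Finset.mul_sum]
      congr 1
      exact sum_swap_mul S a (fun t e => x t e) V
  simp only [hν, mul_sub, Finset.sum_sub_distrib]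
  congr 1
  · rw [sum_swap_mul' S a (fun t b => x t b * ∑ e, x t e * V e) K]
    refine Finset.sum_congr rfl fun t _ => ?_
    congr 1
    rw [Finset.sum_mul]
    exact Finset.sum_congr rfl fun b _ => by ring
  · have h : ∀ b : Fin m, K b * ((∑ t ∈ S, a t * x t b) * (∑ t ∈ S, a t * ∑ e, x t e * V e))
        = (K b * ∑ t ∈ S, a t * x t b) * (∑ t ∈ S, a t * ∑ e, x t e * V e) := fun b => by ring
    simp only [h, ← Finset.sum_mul]
    congr 1
    exact sum_swap_mul' S a (fun t b => x t b) K

private lemma softmax_deriv {ι : Type*} (S : Finset ι) (hS : S.Nonempty) (s c v : ι → ℝ) :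
    HasDerivAt (fun ε : ℝ =>
        ∑ t ∈ S, (Real.exp (s t + ε * c t) / ∑ t' ∈ S, Real.exp (s t' + ε * c t')) * v t)
      ((∑ t ∈ S, Real.exp (s t) / (∑ t' ∈ S, Real.exp (s t')) * (c t * v t)) -
        (∑ t ∈ S, Real.exp (s t) / (∑ t' ∈ S, Real.exp (s t')) * c t) *
          (∑ t ∈ S, Real.exp (s t) / (∑ t' ∈ S, Real.exp (s t')) * v t)) 0 := by
  set D : ℝ := ∑ t' ∈ S, Real.exp (s t') with hD
  have hDpos : 0 < D := Finset.sum_pos (fun t _ => Real.exp_pos _) hS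
  have hDne : D ≠ 0 := hDpos.ne'
  set C : ℝ := ∑ t' ∈ S, Real.exp (s t') * c t' with hC
  have hnum : ∀ t : ι, HasDerivAt (fun ε : ℝ => Real.exp (s t + ε * c t))
      (Real.exp (s t) * c t) 0 := by
    intro t
    have h1 : HasDerivAt (fun ε : ℝ => s t + ε * c t) (c t) 0 := by
      simpa using (hasDerivAt_mul_const (c t)).const_add (s t)
    simpa using h1.exp
  have hden : HasDerivAt (fun ε : ℝ => ∑ t' ∈ S, Real.exp (s t' + ε * c t')) C 0 :=
    HasDerivAt.fun_sum (fun t _ => hnum t)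
  have hterm : ∀ t ∈ S, HasDerivAt
      (fun ε : ℝ => (Real.exp (s t + ε * c t) / ∑ t' ∈ S, Real.exp (s t' + ε * c t')) * v t)
      (((Real.exp (s t) * c t * D - Real.exp (s t) * C) / D ^ 2) * v t) 0 := by
    intro t _
    have h := ((hnum t).div hden (by simpa [hD] using hDne)).mul_const (v t)
    simpa [hD] using h
  have hsum := HasDerivAt.fun_sum hterm
  refine hsum.congr_deriv (Eq.symm ?_)
  have hpt : ∀ t : ι, ((Real.exp (s t) * c t * D - Real.exp (s t) * C) / D ^ 2) * v t
      = Real.exp (s t) / D * (c t * v t) - (Real.exp (s t) / D * v t) * (C / D) := by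
    intro t
    field_simp
  have hCD : C / D = ∑ t ∈ S, Real.exp (s t) / D * c t := by
    rw [hC, Finset.sum_div]
    exact Finset.sum_congr rfl fun t _ => by ring
  simp only [hpt, Finset.sum_sub_distrib]
  congr 1
  rw [← Finset.sum_mul, hCD]
  ring


/-- Derivative of the (softmax-over-`S`) attention output for query `l`
with respect to the `(i,j)` entry of the query weight matrix `W_Q`. -/
theorem knn_attention_deriv_WQ
    (n dm d : ℕ) (hn : 0 < n) (hdm : 0 < dm) (hd : 0 < d)
    (X : Matrix (Fin n) (Fin dm) ℝ)
    (WQ WK WV : Matrix (Fin dm) (Fin d) ℝ)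
    (l : Fin n) (S : Finset (Fin n)) (hS : S.Nonempty)
    -- attention weights for a given query weight matrix `W`
    (a : Matrix (Fin dm) (Fin d) ℝ → Fin n → ℝ)
    (ha : ∀ W t, a W t =
      Real.exp ((Matrix.vecMul (X l) W ⬝ᵥ Matrix.vecMul (X t) WK) / Real.sqrt d) /
        ∑ t' ∈ S, Real.exp ((Matrix.vecMul (X l) W ⬝ᵥ Matrix.vecMul (X t') WK) / Real.sqrt d))
    -- attention output `V̂_l(W)` as a row vector in `ℝ^d`
    (Vhat : Matrix (Fin dm) (Fin d) ℝ → Fin d → ℝ)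
    (hVhat : ∀ W c, Vhat W c = ∑ t ∈ S, a W t * Matrix.vecMul (X t) WV c)
    -- the weighted covariance matrix of the tokens under the weights `a WQ`
    (Var : Matrix (Fin dm) (Fin dm) ℝ)
    (hVar : ∀ b c, Var b c =
      (∑ t ∈ S, a WQ t * (X t b * X t c)) -
        (∑ t ∈ S, a WQ t * X t b) * (∑ t ∈ S, a WQ t * X t c)) :
    ∀ (i : Fin dm) (j : Fin d),
      HasDerivAt (fun ε : ℝ => Vhat (WQ + ε • Matrix.single i j 1))
        ((1 / Real.sqrt d * X l i) •
          Matrix.vecMul (fun b => WK b j) (Var * WV)) 0 := by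
  intro i j
  refine hasDerivAt_pi.mpr fun c => ?_
  have hscore : ∀ (ε : ℝ) (t : Fin n),
      (Matrix.vecMul (X l) (WQ + ε • Matrix.single i j 1) ⬝ᵥ Matrix.vecMul (X t) WK)
          / Real.sqrt d
        = (Matrix.vecMul (X l) WQ ⬝ᵥ Matrix.vecMul (X t) WK) / Real.sqrt d
          + ε * (X l i * Matrix.vecMul (X t) WK j / Real.sqrt d) := by
    intro ε t
    rw [Matrix.vecMul_add, add_dotProduct,
      show (Matrix.vecMul (X l) (ε • Matrix.single i j 1) ⬝ᵥ Matrix.vecMul (X t) WK)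
          = ε * (X l i * Matrix.vecMul (X t) WK j) from by
        simp [Matrix.vecMul, dotProduct, Matrix.single, Matrix.smul_apply, smul_eq_mul,
          ite_and, ite_mul, mul_ite, Finset.sum_ite_eq, Finset.mul_sum]
        exact Finset.sum_congr rfl fun b _ => by ring,
      add_div, mul_div_assoc]
  have hE : (fun ε : ℝ => Vhat (WQ + ε • Matrix.single i j 1) c)
      = fun ε : ℝ => ∑ t ∈ S,
          (Real.exp ((Matrix.vecMul (X l) WQ ⬝ᵥ Matrix.vecMul (X t) WK) / Real.sqrt d
              + ε * (X l i * Matrix.vecMul (X t) WK j / Real.sqrt d)) /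
            ∑ t' ∈ S, Real.exp ((Matrix.vecMul (X l) WQ ⬝ᵥ Matrix.vecMul (X t') WK) / Real.sqrt d
              + ε * (X l i * Matrix.vecMul (X t') WK j / Real.sqrt d))) *
            Matrix.vecMul (X t) WV c := by
    funext ε
    rw [hVhat]
    refine Finset.sum_congr rfl fun t ht => ?_
    rw [ha]
    simp only [hscore]
  have hmain := softmax_deriv S hS
    (fun t => (Matrix.vecMul (X l) WQ ⬝ᵥ Matrix.vecMul (X t) WK) / Real.sqrt d)
    (fun t => X l i * Matrix.vecMul (X t) WK j / Real.sqrt d)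
    (fun t => Matrix.vecMul (X t) WV c)
  rw [show (fun ε : ℝ => Vhat (WQ + ε • Matrix.single i j 1) c) = _ from hE]
  refine hmain.congr_deriv (Eq.symm ?_)
  -- now the value equality
  have haa : ∀ t : Fin n,
      Real.exp ((Matrix.vecMul (X l) WQ ⬝ᵥ Matrix.vecMul (X t) WK) / Real.sqrt d) /
        (∑ t' ∈ S, Real.exp ((Matrix.vecMul (X l) WQ ⬝ᵥ Matrix.vecMul (X t') WK) / Real.sqrt d))
      = a WQ t := fun t => (ha WQ t).symm
  simp only [haa]
  simp only [Pi.smul_apply, smul_eq_mul, Matrix.vecMul, Matrix.mul_apply, dotProduct, hVar]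
  rw [cov_contract S (fun t b => X t b) (a WQ) (fun b => WK b j) (fun e => WV e c)]
  have h1 : ∑ t ∈ S, a WQ t *
        ((X l i * ∑ b : Fin dm, X t b * WK b j) / Real.sqrt d * ∑ e : Fin dm, X t e * WV e c)
      = 1 / Real.sqrt d * X l i * ∑ t ∈ S, a WQ t *
          ((∑ b : Fin dm, X t b * WK b j) * ∑ e : Fin dm, X t e * WV e c) := by
    rw [Finset.mul_sum]
    exact Finset.sum_congr rfl fun t _ => by ring
  have h2 : ∑ t ∈ S, a WQ t * ((X l i * ∑ b : Fin dm, X t b * WK b j) / Real.sqrt d)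
      = 1 / Real.sqrt d * X l i * ∑ t ∈ S, a WQ t * ∑ b : Fin dm, X t b * WK b j := by
    rw [Finset.mul_sum]
    exact Finset.sum_congr rfl fun t _ => by ring
  rw [h1, h2]
  ring
end

section
/- Let K ∈ ℝ^{n×d} have rows k₁,…,k_n ∈ ℝ^d (row vectors) that sum to the zero vector, and let q ∈ ℝ^d be a row vector. Consider f(β) = ‖β K − q‖₂² for β ∈ ℝ^{1×n}, whose gradient is ∇f(β) = 2(βK − q)K^T. Starting from the uniform point β₀ = (1/n,…,1/n) in the probability simplex, one step of the exponentiated-gradient update with step size η = 1/(2√d), namely β₁_i = β₀_i exp(−η (∇f(β₀))_i) / Σ_{j=1}^n β₀_j exp(−η (∇f(β₀))_j), yields exactly the softmax attention weights: β₁_i = exp(k_i q^T/√d) / Σ_{j=1}^n exp(k_j q^T/√d) for every i = 1,…,n. -/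
open Matrix Finset Real

/-- One exponentiated-gradient step on `f(β) = ‖βK − q‖₂²`
(whose gradient is `2(βK − q)Kᵀ`), starting from the uniform point of the simplex with
step size `η = 1/(2√d)`, yields exactly the softmax attention weights
`exp (kᵢ qᵀ/√d) / Σⱼ exp (kⱼ qᵀ/√d)`, provided the rows of `K` sum to zero. -/
theorem eg_step_is_softmax
    (n d : ℕ) (hn : 0 < n) (hd : 0 < d)
    (K : Matrix (Fin n) (Fin d) ℝ)
    (hzero : ∀ j, ∑ i, K i j = 0)
    (q : Fin d → ℝ)
    (β₀ : Fin n → ℝ) (hβ₀ : ∀ i, β₀ i = 1 / n)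
    (η : ℝ) (hη : η = 1 / (2 * Real.sqrt d))
    -- the gradient of `f` at `β₀`: `∇f(β₀) = 2(β₀ K − q) Kᵀ`
    (g : Fin n → ℝ)
    (hg : ∀ i, g i = 2 * ((Matrix.vecMul β₀ K - q) ⬝ᵥ K i)) :
    ∀ i, β₀ i * Real.exp (-η * g i) / (∑ j, β₀ j * Real.exp (-η * g j)) =
      Real.exp (K i ⬝ᵥ q / Real.sqrt d) / ∑ j, Real.exp (K j ⬝ᵥ q / Real.sqrt d) := by
  have hd' : Real.sqrt d ≠ 0 := by
    positivity
  have hvm : Matrix.vecMul β₀ K = 0 := by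
    funext j
    simp only [Matrix.vecMul, dotProduct, hβ₀]
    rw [← Finset.mul_sum, hzero j, mul_zero]
    rfl
  have hexp : ∀ i, -η * g i = K i ⬝ᵥ q / Real.sqrt d := by
    intro i
    rw [hg i, hvm, hη, dotProduct_comm]
    simp only [zero_sub, neg_dotProduct, dotProduct_neg]
    field_simp
  intro i
  simp only [hexp, hβ₀]
  rw [← Finset.mul_sum, mul_div_mul_left _ _ (by positivity : (1:ℝ)/n ≠ 0)]
end
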